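/- Let Δ be a Cohen-Macaulay simplicial forest on vertex set V(Δ) with R = K[x_v : v ∈ V(Δ)], let F₁ be a special leaf of Δ with A = ⋂_{j : F₁∩G_j ≠ ∅}(F₁ ∩ G_j) ≠ ∅ (the intersection over the facets G_j ≠ F₁ meeting F₁), and let Δ₂ be the simplicial complex whose facet set is (F(Δ) ∖ N_Δ[F₁]) ∪ {A}. Then: (a) I(Δ)^{[k]} + ⟨x_{F₁}⟩ + ⟨x_A⟩ = I(Δ₂)^{[k]} + ⟨x_A⟩ for 2 ≤ k ≤ ν(Δ); (b) A is a special leaf of Δ₂; and (c) Δ₂ is a Cohen-Macaulay simplicial forest. -/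

import Mathlib

open MvPolynomial

/-- A simplicial complex on the vertex set `V`, presented by its set of facets
(the maximal faces).  Every facet is nonempty and no facet contains another. -/
structure SimplicialComplexOn (V : Type) [Fintype V] [DecidableEq V] : Type where
  facets : Finset (Finset V)
  nonempty_facet : ∀ F ∈ facets, F.Nonempty
  antichain : ∀ F ∈ facets, ∀ G ∈ facets, F ⊆ G → F = G

variable {V : Type} [Fintype V] [DecidableEq V]

/-- `F` is a leaf of the collection of facets `S`: either `F` is the only facet, or
there is a facet `G ≠ F` (a joint) with `F ∩ H ⊆ F ∩ G` for every facet `H ≠ F`. -/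
def IsLeafOf (S : Finset (Finset V)) (F : Finset V) : Prop :=
  F ∈ S ∧ ((∀ H ∈ S, H = F) ∨
    ∃ G ∈ S, G ≠ F ∧ ∀ H ∈ S, H ≠ F → F ∩ H ⊆ F ∩ G)

/-- The forest property for a facet collection: every nonempty subcollection
(i.e. every nonempty subcomplex) has a leaf. -/
def HasLeafProp (S : Finset (Finset V)) : Prop :=
  ∀ T ⊆ S, T.Nonempty → ∃ F, IsLeafOf T F

/-- A good leaf: a facet which is a leaf of every subcomplex containing it. -/
def IsGoodLeafOf (S : Finset (Finset V)) (F : Finset V) : Prop :=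
  F ∈ S ∧ ∀ T ⊆ S, F ∈ T → IsLeafOf T F

/-- A special leaf: a leaf `F` such that for all facets `H, H' ≠ F`,
`H ∩ H' ≠ ∅` iff `(H ∩ H') \ F ≠ ∅`. -/
def IsSpecialLeafOf (S : Finset (Finset V)) (F : Finset V) : Prop :=
  IsLeafOf S F ∧ ∀ H ∈ S, ∀ H' ∈ S, H ≠ F → H' ≠ F →
    ((H ∩ H').Nonempty ↔ ((H ∩ H') \ F).Nonempty)

/-- A matching: a subcollection of the facets that is pairwise disjoint. -/
def IsMatchingOf (S : Finset (Finset V)) (M : Finset (Finset V)) : Prop :=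
  M ⊆ S ∧ ∀ F ∈ M, ∀ G ∈ M, F ≠ G → F ∩ G = ∅

/-- The matching number: maximum size of a matching. -/
noncomputable def matchingNumberOf (S : Finset (Finset V)) : ℕ :=
  sSup {n | ∃ M : Finset (Finset V), IsMatchingOf S M ∧ M.card = n}

/-- The facet collection `S` is grafted: it decomposes as `Fs ∪ Gs` where
(1) every vertex of a `G ∈ Gs` lies in some `F ∈ Fs`, (2) `Fs` is exactly the set
of leaves of `S`, (3) `Fs` and `Gs` are disjoint, (4) the members of `Fs` are
pairwise disjoint, and (5) for each `G ∈ Gs`, deleting the facet `G` leaves a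
grafted collection. -/
inductive IsGrafted : Finset (Finset V) → Prop where
  | intro (S Fs Gs : Finset (Finset V))
      (hunion : S = Fs ∪ Gs)
      (hdisj : Disjoint Fs Gs)
      (hcover : ∀ G ∈ Gs, ∀ v ∈ G, ∃ F ∈ Fs, v ∈ F)
      (hleaves : ∀ F, IsLeafOf S F ↔ F ∈ Fs)
      (hFdisj : ∀ F ∈ Fs, ∀ F' ∈ Fs, F ≠ F' → F ∩ F' = ∅)
      (hrec : ∀ G ∈ Gs, IsGrafted (S.erase G)) :
      IsGrafted S

/-- `S` is the (minimal presentation of the) grafting of the collection `Gs`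
with the simplices `Fs`. -/
def IsGraftingDecomp (S Fs Gs : Finset (Finset V)) : Prop :=
  S = Fs ∪ Gs ∧ Disjoint Fs Gs ∧
  (∀ G ∈ Gs, ∀ v ∈ G, ∃ F ∈ Fs, v ∈ F) ∧
  (∀ F, IsLeafOf S F ↔ F ∈ Fs) ∧
  (∀ F ∈ Fs, ∀ F' ∈ Fs, F ≠ F' → F ∩ F' = ∅) ∧
  (∀ G ∈ Gs, IsGrafted (S.erase G))

/-- A Cohen-Macaulay simplicial forest, combinatorially: a grafted simplicial forest. -/
def IsCMForestFacets (S : Finset (Finset V)) : Prop :=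
  HasLeafProp S ∧ IsGrafted S

/-- The closed neighborhood `N[F] = {F} ∪ {G ∈ S : G ≠ F, G ∩ F ≠ ∅}`. -/
def closedNbhd (S : Finset (Finset V)) (F : Finset V) : Finset (Finset V) :=
  insert F (S.filter fun G => G ≠ F ∧ (G ∩ F).Nonempty)

/-- The contraction of the facet collection `S` on `A`: the minimal members of
`{F \ A : F ∈ S}`. -/
def contraction (S : Finset (Finset V)) (A : Finset V) : Finset (Finset V) :=
  (S.image fun F => F \ A).filter fun F' => ∀ G ∈ S, G \ A ⊆ F' → G \ A = F'

variable (K : Type) [Field K]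

/-- The square-free monomial `x_S = ∏_{v ∈ S} x_v`. -/
noncomputable def xMon (S : Finset V) : MvPolynomial V K := ∏ v ∈ S, X v

/-- The facet ideal `I(Δ) = ⟨x_F : F a facet⟩`. -/
noncomputable def facetIdealOf (S : Finset (Finset V)) : Ideal (MvPolynomial V K) :=
  Ideal.span { p | ∃ F ∈ S, p = xMon K F }

/-- The `k`-th square-free power of an ideal: the ideal generated by all
square-free monomials lying in `I ^ k`. -/
noncomputable def sqfreePow (I : Ideal (MvPolynomial V K)) (k : ℕ) :
    Ideal (MvPolynomial V K) :=
  Ideal.span { p | (∃ S : Finset V, p = xMon K S) ∧ p ∈ I ^ k }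

/-- The depth of `R/I` with respect to the homogeneous maximal ideal
`m = ⟨x_v : v ∈ V⟩`: the largest length of an `R/I`-regular sequence of
elements of `m`. -/
noncomputable def gradedDepth (I : Ideal (MvPolynomial V K)) : ℕ :=
  sSup {n | ∃ rs : List (MvPolynomial V K), rs.length = n ∧
    (∀ r ∈ rs, r ∈ Ideal.span (Set.range (X : V → MvPolynomial V K))) ∧
    RingTheory.Sequence.IsRegular (MvPolynomial V K ⧸ I) rs}

/-- `R/I` is Cohen-Macaulay: its depth equals its Krull dimension. -/
def IsCMQuot (I : Ideal (MvPolynomial V K)) : Prop :=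
  ((gradedDepth K I : ℕ∞) : WithBot ℕ∞) = ringKrullDim (MvPolynomial V K ⧸ I)

section Statements

variable {V : Type} [Fintype V] [DecidableEq V] (K : Type) [Field K]

set_option linter.unusedSectionVars false

noncomputable def eS (S : Finset V) : V →₀ ℕ := ∑ v ∈ S, Finsupp.single v 1

lemma eS_apply (S : Finset V) (v : V) : eS S v = if v ∈ S then 1 else 0 := by
  classical
  simp [eS, Finsupp.finset_sum_apply, Finsupp.single_apply]

lemma eS_le_iff {F T : Finset V} : eS F ≤ eS T ↔ F ⊆ T := by
  constructor
  · intro h v hv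
    have := (Finsupp.le_def.mp h) v
    rw [eS_apply, eS_apply, if_pos hv] at this
    by_contra hvT
    rw [if_neg hvT] at this; omega
  · intro h
    rw [Finsupp.le_def]
    intro v
    rw [eS_apply, eS_apply]
    by_cases hv : v ∈ F
    · rw [if_pos hv, if_pos (h hv)]
    · rw [if_neg hv]; exact Nat.zero_le _

lemma eS_insert {a : V} {s : Finset V} (h : a ∉ s) :
    eS (insert a s) = Finsupp.single a 1 + eS s := Finset.sum_insert h

lemma xMon_eq (S : Finset V) : xMon K S = monomial (eS S) (1:K) := by
  classical
  induction S using Finset.induction_on with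
  | empty => simp [xMon, eS]
  | @insert a s hnotmem ih =>
    rw [xMon, Finset.prod_insert hnotmem, ← xMon, ih]
    have : (X a : MvPolynomial V K) = monomial (Finsupp.single a 1) 1 := rfl
    rw [this, monomial_mul, one_mul, eS_insert hnotmem]

lemma xMon_dvd {F T : Finset V} (h : F ⊆ T) : xMon K F ∣ xMon K T := by
  refine ⟨xMon K (T \ F), ?_⟩
  rw [xMon, xMon, xMon, mul_comm, Finset.prod_sdiff h]

lemma xMon_list_prod (L : List (Finset V)) :
    (L.map (xMon K)).prod = monomial ((L.map eS).sum) (1:K) := by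
  induction L with
  | nil => simp
  | cons a l ih =>
    rw [List.map_cons, List.prod_cons, ih, xMon_eq, monomial_mul, one_mul,
      List.map_cons, List.sum_cons]

def powGens (S : Finset (Finset V)) (k : ℕ) : Set (V →₀ ℕ) :=
  {d | ∃ L : List (Finset V), L.length = k ∧ (∀ F ∈ L, F ∈ S) ∧ d = (L.map eS).sum}

lemma facetIdeal_gens (S : Finset (Finset V)) :
    { p : MvPolynomial V K | ∃ F ∈ S, p = xMon K F }
      = (fun d => monomial d (1:K)) '' {d | ∃ F ∈ S, d = eS F} := by
  ext p
  constructor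
  · rintro ⟨F, hF, rfl⟩
    exact ⟨eS F, ⟨F, hF, rfl⟩, (xMon_eq K F).symm⟩
  · rintro ⟨d, ⟨F, hF, rfl⟩, rfl⟩
    exact ⟨F, hF, (xMon_eq K F).symm⟩

lemma pow_facetIdeal_eq (S : Finset (Finset V)) (k : ℕ) :
    facetIdealOf K S ^ k = Ideal.span ((fun d => monomial d (1:K)) '' powGens S k) := by
  induction k with
  | zero =>
    rw [pow_zero, Ideal.one_eq_top]
    symm
    rw [Ideal.eq_top_iff_one]
    apply Ideal.subset_span
    exact ⟨0, ⟨[], rfl, by simp, by simp⟩, by simp⟩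
  | succ k ih =>
    rw [pow_succ, ih, facetIdealOf, facetIdeal_gens, Ideal.span_mul_span']
    congr 1
    ext p
    rw [Set.mem_mul]
    constructor
    · rintro ⟨a, ⟨d, ⟨L, hL, hLS, rfl⟩, rfl⟩, b, ⟨e, ⟨F, hF, rfl⟩, rfl⟩, rfl⟩
      refine ⟨(L.map eS).sum + eS F, ⟨L ++ [F], by simp [hL], ?_, by simp⟩, by
        rw [monomial_mul, one_mul]⟩
      intro G hG
      rcases List.mem_append.mp hG with h | h
      · exact hLS G h
      · simp at h; exact h ▸ hF
    · rintro ⟨d, ⟨L, hL, hLS, rfl⟩, rfl⟩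
      rcases L with _ | ⟨F, L'⟩
      · simp at hL
      · simp only [List.length_cons] at hL
        refine ⟨monomial ((L'.map eS).sum) 1, ⟨(L'.map eS).sum, ⟨L', by omega,
          fun G hG => hLS G (List.mem_cons_of_mem _ hG), rfl⟩, rfl⟩,
          monomial (eS F) 1, ⟨eS F, ⟨F, hLS F List.mem_cons_self, rfl⟩, rfl⟩, ?_⟩
        rw [monomial_mul, one_mul, List.map_cons, List.sum_cons, add_comm]

lemma mem_pow_iff (S : Finset (Finset V)) (k : ℕ) (T : Finset V) :
    xMon K T ∈ facetIdealOf K S ^ k ↔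
      ∃ L : List (Finset V), L.length = k ∧ (∀ F ∈ L, F ∈ S) ∧ (L.map eS).sum ≤ eS T := by
  classical
  rw [pow_facetIdeal_eq, xMon_eq]
  rw [mem_ideal_span_monomial_image]
  constructor
  · intro h
    have h1 : eS T ∈ (monomial (eS T) (1:K)).support := by
      rw [support_monomial, if_neg one_ne_zero]; exact Finset.mem_singleton_self _
    obtain ⟨d, ⟨L, hL, hLS, rfl⟩, hle⟩ := h (eS T) h1
    exact ⟨L, hL, hLS, hle⟩
  · rintro ⟨L, hL, hLS, hle⟩
    intro m hm
    rw [support_monomial, if_neg one_ne_zero, Finset.mem_singleton] at hm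
    exact ⟨(L.map eS).sum, ⟨L, hL, hLS, rfl⟩, hm ▸ hle⟩

lemma mem_pow_of_list (S : Finset (Finset V)) (T : Finset V) (L : List (Finset V))
    (hLS : ∀ F ∈ L, F ∈ S) (hle : (L.map eS).sum ≤ eS T) :
    xMon K T ∈ facetIdealOf K S ^ L.length :=
  (mem_pow_iff K S L.length T).mpr ⟨L, rfl, hLS, hle⟩

lemma subset_of_mem_list {L : List (Finset V)} {T F : Finset V} (hF : F ∈ L)
    (hle : (L.map eS).sum ≤ eS T) : F ⊆ T := by
  rw [← eS_le_iff]
  refine le_trans ?_ hle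
  exact List.single_le_sum (fun x _ => by positivity) _ (List.mem_map_of_mem (f := eS) hF)

lemma mem_span_xMon {A T : Finset V} (h : A ⊆ T) :
    xMon K T ∈ Ideal.span {xMon K A} :=
  Ideal.mem_span_singleton.mpr (xMon_dvd K h)

lemma mem_sqfreePow {I : Ideal (MvPolynomial V K)} {k : ℕ} {T : Finset V}
    (h : xMon K T ∈ I ^ k) : xMon K T ∈ sqfreePow K I k :=
  Ideal.subset_span ⟨⟨T, rfl⟩, h⟩

lemma part_a (S : Finset (Finset V)) (F₁ A : Finset V) (k : ℕ)
    (hAF : A ⊆ F₁)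
    (hAnbr : ∀ G ∈ S, G ≠ F₁ → (F₁ ∩ G).Nonempty → A ⊆ G)
    (Δ₂ : Finset (Finset V))
    (hΔ₂ : Δ₂ = insert A (S \ closedNbhd S F₁)) :
    sqfreePow K (facetIdealOf K S) k + Ideal.span {xMon K F₁} +
        Ideal.span {xMon K A} =
      sqfreePow K (facetIdealOf K Δ₂) k + Ideal.span {xMon K A} := by
  have hmemΔ₂ : ∀ F ∈ S, F ≠ F₁ → ¬(F ∩ F₁).Nonempty → F ∈ Δ₂ := by
    intro F hFS hne hint
    rw [hΔ₂]
    apply Finset.mem_insert_of_mem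
    rw [Finset.mem_sdiff]
    refine ⟨hFS, ?_⟩
    rw [closedNbhd, Finset.mem_insert]
    push_neg
    refine ⟨hne, ?_⟩
    simp only [Finset.mem_filter, not_and]
    intro _ _
    exact hint
  have hΔ₂S : ∀ F ∈ Δ₂, F ≠ A → F ∈ S := by
    intro F hF hne
    rw [hΔ₂, Finset.mem_insert] at hF
    rcases hF with h | h
    · exact absurd h hne
    · exact (Finset.mem_sdiff.mp h).1
  rw [Ideal.add_eq_sup, Ideal.add_eq_sup, Ideal.add_eq_sup]
  apply le_antisymm
  · apply sup_le (sup_le ?_ ?_) le_sup_right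
    · rw [sqfreePow]
      apply Ideal.span_le.mpr
      rintro p ⟨⟨T, rfl⟩, hpk⟩
      by_cases hA : A ⊆ T
      · exact Submodule.mem_sup_right (mem_span_xMon K hA)
      · obtain ⟨L, hLk, hLS, hle⟩ := (mem_pow_iff K S k T).mp hpk
        have hmem : ∀ F ∈ L, F ∈ Δ₂ := by
          intro F hFL
          have hFT : F ⊆ T := subset_of_mem_list hFL hle
          have hne : F ≠ F₁ := by
            rintro rfl
            exact hA (hAF.trans hFT)
          apply hmemΔ₂ F (hLS F hFL) hne
          intro hint
          rw [Finset.inter_comm] at hint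
          exact hA ((hAnbr F (hLS F hFL) hne hint).trans hFT)
        exact Submodule.mem_sup_left
          (mem_sqfreePow K ((mem_pow_iff K Δ₂ k T).mpr ⟨L, hLk, hmem, hle⟩))
    · apply Ideal.span_le.mpr
      rintro p hp
      rw [Set.mem_singleton_iff] at hp
      subst hp
      exact Submodule.mem_sup_right (mem_span_xMon K hAF)
  · apply sup_le ?_ le_sup_right
    rw [sqfreePow]
    apply Ideal.span_le.mpr
    rintro p ⟨⟨T, rfl⟩, hpk⟩
    by_cases hA : A ⊆ T
    · exact Submodule.mem_sup_right (mem_span_xMon K hA)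
    · obtain ⟨L, hLk, hLS, hle⟩ := (mem_pow_iff K Δ₂ k T).mp hpk
      have hmem : ∀ F ∈ L, F ∈ S := by
        intro F hFL
        refine hΔ₂S F (hLS F hFL) ?_
        rintro rfl
        exact hA (subset_of_mem_list hFL hle)
      exact Submodule.mem_sup_left (Submodule.mem_sup_left
        (mem_sqfreePow K ((mem_pow_iff K S k T).mpr ⟨L, hLk, hmem, hle⟩)))

lemma isolated_leaf {T : Finset (Finset V)} {F : Finset V} (hF : F ∈ T)
    (hiso : ∀ H ∈ T, H ≠ F → F ∩ H = ∅) : IsLeafOf T F := by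
  refine ⟨hF, ?_⟩
  by_cases h : ∃ G ∈ T, G ≠ F
  · obtain ⟨G, hG, hGF⟩ := h
    exact Or.inr ⟨G, hG, hGF, fun H hH hHF => by
      rw [hiso H hH hHF]; exact Finset.empty_subset _⟩
  · push_neg at h
    exact Or.inl h

lemma graft_leaf_disjoint {S : Finset (Finset V)} (hG : IsGrafted S) {F G : Finset V}
    (hF : IsLeafOf S F) (hGl : IsLeafOf S G) (hne : F ≠ G) : F ∩ G = ∅ := by
  cases hG with
  | intro S Fs Gs hu hd hc hl hfd hr =>
    exact hfd F ((hl F).mp hF) G ((hl G).mp hGl) hne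

lemma graft_erase {S : Finset (Finset V)} (hG : IsGrafted S) {X : Finset V}
    (hX : X ∈ S) (hnl : ¬ IsLeafOf S X) : IsGrafted (S.erase X) := by
  cases hG with
  | intro S Fs Gs hu hd hc hl hfd hr =>
    apply hr
    rw [hu] at hX
    rcases Finset.mem_union.mp hX with h | h
    · exact absurd ((hl X).mpr h) hnl
    · exact h

lemma graft_peel (S : Finset (Finset V)) (hS : IsGrafted S) (F₁ G0 : Finset V)
    (hF₁ : F₁ ∈ S) (hG0 : G0 ∈ S) (hG0ne : G0 ≠ F₁)
    (hjoint : ∀ H ∈ S, H ≠ F₁ → F₁ ∩ H ⊆ F₁ ∩ G0)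
    (D : Finset (Finset V))
    (hD : D ⊆ (S.filter fun G => G ≠ F₁ ∧ (G ∩ F₁).Nonempty).erase G0) :
    IsGrafted (S \ D) := by
  classical
  induction D using Finset.induction_on with
  | empty => rw [Finset.sdiff_empty]; exact hS
  | @insert a D' ha ih =>
    have haN := (Finset.insert_subset_iff.mp hD).1
    have hD' := (Finset.insert_subset_iff.mp hD).2
    have hGr := ih hD'
    rw [Finset.mem_erase, Finset.mem_filter] at haN
    obtain ⟨haG0, haS, haF₁, haint⟩ : _ ∧ _ ∧ _ ∧ _ :=
      ⟨haN.1, haN.2.1, haN.2.2.1, haN.2.2.2⟩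
    have hnotinD' : ∀ X ∈ D', X ≠ F₁ ∧ X ≠ G0 := by
      intro X hX
      have := hD' hX
      rw [Finset.mem_erase, Finset.mem_filter] at this
      exact ⟨this.2.2.1, this.1⟩
    have hF₁leaf : IsLeafOf (S \ D') F₁ := by
      refine ⟨Finset.mem_sdiff.mpr ⟨hF₁, fun h => (hnotinD' F₁ h).1 rfl⟩,
        Or.inr ⟨G0, Finset.mem_sdiff.mpr ⟨hG0, fun h => (hnotinD' G0 h).2 rfl⟩, hG0ne,
          fun H hH hne => hjoint H (Finset.mem_sdiff.mp hH).1 hne⟩⟩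
    rw [Finset.sdiff_insert]
    apply graft_erase hGr (Finset.mem_sdiff.mpr ⟨haS, ha⟩)
    intro hleaf
    have hdisj := graft_leaf_disjoint hGr hleaf hF₁leaf haF₁
    rw [hdisj] at haint
    exact Finset.not_nonempty_empty haint

lemma graft_replace {A F₁ : Finset V} (hAF : A ⊆ F₁)
    {T : Finset (Finset V)} (hT : IsGrafted T) :
    F₁ ∈ T → (∀ H ∈ T, H ≠ F₁ → H ∩ F₁ = ∅) → A ∉ T →
    IsGrafted (insert A (T.erase F₁)) := by
  classical
  induction hT with
  | intro T Fs Gs hu hd hc hl hfd hr ih =>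
    intro hF₁ hiso hAT
    have hF₁iso : ∀ H ∈ T, H ≠ F₁ → F₁ ∩ H = ∅ := fun H hH hne => by
      rw [Finset.inter_comm]; exact hiso H hH hne
    have hF₁leaf : IsLeafOf T F₁ := isolated_leaf hF₁ hF₁iso
    have hF₁Fs : F₁ ∈ Fs := (hl F₁).mp hF₁leaf
    have hF₁Gs : F₁ ∉ Gs := Finset.disjoint_left.mp hd hF₁Fs
    have hAGs : A ∉ Gs := fun h => hAT (by rw [hu]; exact Finset.mem_union_right _ h)
    have hFsT : Fs ⊆ T := by rw [hu]; exact Finset.subset_union_left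
    have hGsT : Gs ⊆ T := by rw [hu]; exact Finset.subset_union_right
    have hXinterA : ∀ X ∈ T, X ≠ F₁ → X ∩ A = ∅ := by
      intro X hX hXne
      have h1 : X ∩ A ⊆ X ∩ F₁ := Finset.inter_subset_inter (Finset.Subset.refl X) hAF
      rw [hiso X hX hXne] at h1
      exact Finset.subset_empty.mp h1
    have hAiso : ∀ H ∈ insert A (T.erase F₁), H ≠ A → A ∩ H = ∅ := by
      intro H hH hne
      rcases Finset.mem_insert.mp hH with rfl | hHe
      · exact absurd rfl hne
      · rw [Finset.inter_comm]
        exact hXinterA H (Finset.mem_of_mem_erase hHe) (Finset.ne_of_mem_erase hHe)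
    refine IsGrafted.intro _ (insert A (Fs.erase F₁)) Gs ?_ ?_ ?_ ?_ ?_ ?_
    · -- union
      ext X
      have h1 : X ∈ Gs → X ≠ F₁ := fun hx he => hF₁Gs (he ▸ hx)
      simp only [Finset.mem_insert, Finset.mem_erase, Finset.mem_union, hu]
      constructor
      · rintro (rfl | ⟨hne, (h | h)⟩)
        · exact Or.inl (Or.inl rfl)
        · exact Or.inl (Or.inr ⟨hne, h⟩)
        · exact Or.inr h
      · rintro ((rfl | ⟨hne, h⟩) | h)
        · exact Or.inl rfl
        · exact Or.inr ⟨hne, Or.inl h⟩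
        · exact Or.inr ⟨h1 h, Or.inr h⟩
    · -- disjoint
      rw [Finset.disjoint_left]
      intro X hX hXGs
      rcases Finset.mem_insert.mp hX with rfl | hXe
      · exact hAGs hXGs
      · exact Finset.disjoint_left.mp hd (Finset.mem_of_mem_erase hXe) hXGs
    · -- cover
      intro G hG v hv
      obtain ⟨F, hF, hvF⟩ := hc G hG v hv
      have hGne : G ≠ F₁ := fun he => hF₁Gs (he ▸ hG)
      have hFne : F ≠ F₁ := by
        rintro rfl
        have : v ∈ G ∩ F := Finset.mem_inter.mpr ⟨hv, hvF⟩
        rw [hiso G (hGsT hG) hGne] at this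
        exact absurd this (Finset.notMem_empty v)
      exact ⟨F, Finset.mem_insert_of_mem (Finset.mem_erase.mpr ⟨hFne, hF⟩), hvF⟩
    · -- leaves
      intro X
      constructor
      · rintro ⟨hXT', hcase⟩
        rcases Finset.mem_insert.mp hXT' with rfl | hXTe
        · exact Finset.mem_insert_self _ _
        · have hXT : X ∈ T := Finset.mem_of_mem_erase hXTe
          have hXne : X ≠ F₁ := Finset.ne_of_mem_erase hXTe
          have hXA : X ≠ A := fun he => hAT (he ▸ hXT)
          apply Finset.mem_insert_of_mem
          rw [Finset.mem_erase]
          refine ⟨hXne, (hl X).mp ⟨hXT, ?_⟩⟩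
          rcases hcase with hall | ⟨J, hJ, hJne, hJprop⟩
          · exact absurd (by rw [hall A (Finset.mem_insert_self _ _)]; exact hXT) hAT
          · by_cases hJA : J = A
            · subst hJA
              refine Or.inr ⟨F₁, hF₁, Ne.symm hXne, ?_⟩
              intro H hH hHne
              by_cases hHF₁ : H = F₁
              · subst hHF₁; exact Finset.Subset.refl _
              · have h2 : X ∩ H ⊆ X ∩ J :=
                  hJprop H (Finset.mem_insert_of_mem (Finset.mem_erase.mpr ⟨hHF₁, hH⟩)) hHne
                rw [hXinterA X hXT hXne] at h2
                exact (Finset.subset_empty.mp h2) ▸ Finset.empty_subset _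
            · have hJT : J ∈ T := Finset.mem_of_mem_erase
                ((Finset.mem_insert.mp hJ).resolve_left hJA)
              refine Or.inr ⟨J, hJT, hJne, ?_⟩
              intro H hH hHne
              by_cases hHF₁ : H = F₁
              · subst hHF₁
                rw [hiso X hXT hXne]
                exact Finset.empty_subset _
              · exact hJprop H (Finset.mem_insert_of_mem (Finset.mem_erase.mpr ⟨hHF₁, hH⟩)) hHne
      · intro hXmem
        rcases Finset.mem_insert.mp hXmem with rfl | hXe
        · exact isolated_leaf (Finset.mem_insert_self _ _) hAiso
        · have hXne : X ≠ F₁ := (Finset.mem_erase.mp hXe).1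
          have hXFs : X ∈ Fs := (Finset.mem_erase.mp hXe).2
          obtain ⟨hXT, hc2⟩ := (hl X).mpr hXFs
          have hXA : X ≠ A := fun he => hAT (he ▸ hXT)
          have hXT' : X ∈ insert A (T.erase F₁) :=
            Finset.mem_insert_of_mem (Finset.mem_erase.mpr ⟨hXne, hXT⟩)
          refine ⟨hXT', ?_⟩
          rcases hc2 with hall | ⟨J, hJT, hJne, hJprop⟩
          · exact absurd (hall F₁ hF₁).symm hXne
          · by_cases hJF₁ : J = F₁
            · subst hJF₁
              refine Or.inr ⟨A, Finset.mem_insert_self _ _, Ne.symm hXA, ?_⟩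
              intro H hH hHne
              rcases Finset.mem_insert.mp hH with rfl | hHe
              · exact Finset.Subset.refl _
              · have h2 : X ∩ H ⊆ X ∩ J := hJprop H (Finset.mem_of_mem_erase hHe) hHne
                rw [hiso X hXT hXne] at h2
                exact (Finset.subset_empty.mp h2) ▸ Finset.empty_subset _
            · refine Or.inr ⟨J, Finset.mem_insert_of_mem (Finset.mem_erase.mpr ⟨hJF₁, hJT⟩),
                hJne, ?_⟩
              intro H hH hHne
              rcases Finset.mem_insert.mp hH with rfl | hHe
              · rw [hXinterA X hXT hXne]
                exact Finset.empty_subset _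
              · exact hJprop H (Finset.mem_of_mem_erase hHe) hHne
    · -- Fs pairwise disjoint
      intro F hF F' hF' hne
      rcases Finset.mem_insert.mp hF with rfl | hFe
      · rcases Finset.mem_insert.mp hF' with rfl | hF'e
        · exact absurd rfl hne
        · rw [Finset.inter_comm]
          exact hXinterA F' (hFsT (Finset.mem_erase.mp hF'e).2) (Finset.mem_erase.mp hF'e).1
      · rcases Finset.mem_insert.mp hF' with rfl | hF'e
        · exact hXinterA F (hFsT (Finset.mem_erase.mp hFe).2) (Finset.mem_erase.mp hFe).1
        · exact hfd F (Finset.mem_erase.mp hFe).2 F' (Finset.mem_erase.mp hF'e).2 hne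
    · -- recursion
      intro G hG
      have hGA : G ≠ A := fun he => hAGs (he ▸ hG)
      have hGF₁ : G ≠ F₁ := fun he => hF₁Gs (he ▸ hG)
      have heq : (insert A (T.erase F₁)).erase G = insert A ((T.erase G).erase F₁) := by
        ext X
        simp only [Finset.mem_erase, Finset.mem_insert]
        constructor
        · rintro ⟨hXG, (rfl | ⟨hXF₁, hXT⟩)⟩
          · exact Or.inl rfl
          · exact Or.inr ⟨hXF₁, hXG, hXT⟩
        · rintro (rfl | ⟨hXF₁, hXG, hXT⟩)
          · exact ⟨Ne.symm hGA, Or.inl rfl⟩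
          · exact ⟨hXG, Or.inr ⟨hXF₁, hXT⟩⟩
      rw [heq]
      exact ih G hG (Finset.mem_erase.mpr ⟨Ne.symm hGF₁, hF₁⟩)
        (fun H hH hne => hiso H (Finset.mem_of_mem_erase hH) hne)
        (fun h => hAT (Finset.mem_of_mem_erase h))

lemma graft_main (S : Finset (Finset V)) (hG : IsGrafted S)
    (F₁ : Finset V) (hleaf : IsLeafOf S F₁)
    (A : Finset V) (hAF : A ⊆ F₁)
    (hAsub : ∀ G ∈ S, G ≠ F₁ → (G ∩ F₁).Nonempty → A ⊆ G)
    (hanti : ∀ F ∈ S, ∀ G ∈ S, F ⊆ G → F = G) :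
    IsGrafted (insert A (S \ closedNbhd S F₁)) := by
  classical
  obtain ⟨hF₁S, hor⟩ := hleaf
  set N := S.filter (fun G => G ≠ F₁ ∧ (G ∩ F₁).Nonempty) with hN
  have hF₁N : F₁ ∉ N := by
    intro h
    exact ((Finset.mem_filter.mp h).2.1) rfl
  have hsd : S \ closedNbhd S F₁ = (S \ N).erase F₁ := by
    rw [closedNbhd, Finset.sdiff_insert]
  have hstep1 : IsGrafted (S \ N) := by
    by_cases hNe : N = ∅
    · rw [hNe, Finset.sdiff_empty]; exact hG
    · obtain ⟨H₀, hH₀⟩ := Finset.nonempty_of_ne_empty hNe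
      have hmf := Finset.mem_filter.mp hH₀
      obtain ⟨hH₀S, hH₀ne, hH₀int⟩ : _ ∧ _ ∧ _ := ⟨hmf.1, hmf.2.1, hmf.2.2⟩
      rcases hor with hall | ⟨G0, hG0S, hG0ne, hG0j⟩
      · exact absurd (hall H₀ hH₀S) hH₀ne
      · have hG0N : G0 ∈ N := by
          rw [hN, Finset.mem_filter]
          refine ⟨hG0S, hG0ne, ?_⟩
          obtain ⟨v, hv⟩ := hH₀int
          have hv2 : v ∈ F₁ ∩ H₀ := by
            rw [Finset.inter_comm]; exact hv
          have hv3 := hG0j H₀ hH₀S hH₀ne hv2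
          rw [Finset.inter_comm] at hv3
          exact ⟨v, hv3⟩
        have hpeel := graft_peel S hG F₁ G0 hF₁S hG0S hG0ne hG0j (N.erase G0)
          (Finset.Subset.refl _)
        have heq : S \ N = (S \ N.erase G0).erase G0 := by
          ext X
          simp only [Finset.mem_sdiff, Finset.mem_erase]
          constructor
          · rintro ⟨hXS, hXN⟩
            exact ⟨fun he => hXN (he ▸ hG0N), hXS, fun h => hXN h.2⟩
          · rintro ⟨hXG0, hXS, hXN⟩
            exact ⟨hXS, fun h => hXN ⟨hXG0, h⟩⟩
        rw [heq]
        apply graft_erase hpeel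
        · rw [Finset.mem_sdiff]
          exact ⟨hG0S, fun h => (Finset.mem_erase.mp h).1 rfl⟩
        · intro hleafG0
          have hF₁leaf : IsLeafOf (S \ N.erase G0) F₁ := by
            refine ⟨Finset.mem_sdiff.mpr ⟨hF₁S, fun h => hF₁N (Finset.mem_of_mem_erase h)⟩,
              Or.inr ⟨G0, Finset.mem_sdiff.mpr ⟨hG0S, fun h => (Finset.mem_erase.mp h).1 rfl⟩,
                hG0ne, fun H hH hne => hG0j H (Finset.mem_sdiff.mp hH).1 hne⟩⟩
          have hd := graft_leaf_disjoint hpeel hleafG0 hF₁leaf hG0ne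
          have hint := (Finset.mem_filter.mp hG0N).2.2
          rw [hd] at hint
          exact Finset.not_nonempty_empty hint
  rw [hsd]
  by_cases hAF₁ : A = F₁
  · subst hAF₁
    have hNempty : N = ∅ := by
      rw [Finset.eq_empty_iff_forall_notMem]
      intro G hGN
      have h := Finset.mem_filter.mp hGN
      exact h.2.1 (hanti A hF₁S G h.1 (hAsub G h.1 h.2.1 h.2.2)).symm
    rw [hNempty, Finset.sdiff_empty, Finset.insert_erase hF₁S]
    exact hG
  · apply graft_replace hAF hstep1
    · exact Finset.mem_sdiff.mpr ⟨hF₁S, hF₁N⟩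
    · intro H hH hne
      obtain ⟨hHS, hHN⟩ := Finset.mem_sdiff.mp hH
      rw [← Finset.not_nonempty_iff_eq_empty]
      intro hne2
      exact hHN (Finset.mem_filter.mpr ⟨hHS, hne, hne2⟩)
    · intro h
      exact hAF₁ (hanti A (Finset.mem_sdiff.mp h).1 F₁ hF₁S hAF)


theorem stmt16 (Δ : SimplicialComplexOn V)
    (hcov : ∀ v : V, ∃ F ∈ Δ.facets, v ∈ F)
    (hCM : IsCMForestFacets Δ.facets)
    (F₁ : Finset V) (hspec : IsSpecialLeafOf Δ.facets F₁)
    (A : Finset V)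
    (hAdef : A = F₁.filter fun v =>
      ∀ G ∈ Δ.facets, G ≠ F₁ → (F₁ ∩ G).Nonempty → v ∈ G)
    (hAne : A.Nonempty)
    (Δ₂ : Finset (Finset V))
    (hΔ₂ : Δ₂ = insert A (Δ.facets \ closedNbhd Δ.facets F₁)) :
    (∀ k : ℕ, 2 ≤ k → k ≤ matchingNumberOf Δ.facets →
      sqfreePow K (facetIdealOf K Δ.facets) k + Ideal.span {xMon K F₁} +
          Ideal.span {xMon K A} =
        sqfreePow K (facetIdealOf K Δ₂) k + Ideal.span {xMon K A}) ∧
    IsSpecialLeafOf Δ₂ A ∧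
    IsCMForestFacets Δ₂ := by
  classical
  obtain ⟨hLP, hGr⟩ := hCM
  obtain ⟨hleaf, hspec2⟩ := hspec
  have hAF : A ⊆ F₁ := by rw [hAdef]; exact Finset.filter_subset _ _
  have hAnbr : ∀ G ∈ Δ.facets, G ≠ F₁ → (F₁ ∩ G).Nonempty → A ⊆ G := by
    intro G hGS hGne hint v hv
    rw [hAdef, Finset.mem_filter] at hv
    exact hv.2 G hGS hGne hint
  have hmemΔ₂ : ∀ H ∈ Δ₂, H ≠ A → H ∈ Δ.facets ∧ H ≠ F₁ ∧ H ∩ F₁ = ∅ := by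
    intro H hH hne
    rw [hΔ₂, Finset.mem_insert] at hH
    rcases hH with rfl | hH
    · exact absurd rfl hne
    · rw [Finset.mem_sdiff, closedNbhd, Finset.mem_insert] at hH
      obtain ⟨hHS, hHn⟩ := hH
      have hHa : H ≠ F₁ := fun he => hHn (Or.inl he)
      refine ⟨hHS, hHa, ?_⟩
      rw [← Finset.not_nonempty_iff_eq_empty]
      intro hne2
      exact hHn (Or.inr (Finset.mem_filter.mpr ⟨hHS, hHa, hne2⟩))
  have hAΔ₂ : A ∈ Δ₂ := by rw [hΔ₂]; exact Finset.mem_insert_self _ _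
  have hAdisj : ∀ H ∈ Δ₂, H ≠ A → A ∩ H = ∅ := by
    intro H hH hne
    have h := (hmemΔ₂ H hH hne).2.2
    rw [Finset.eq_empty_iff_forall_notMem]
    intro x hx
    obtain ⟨hxA, hxH⟩ := Finset.mem_inter.mp hx
    have hx2 : x ∈ H ∩ F₁ := Finset.mem_inter.mpr ⟨hxH, hAF hxA⟩
    rw [h] at hx2
    exact Finset.notMem_empty x hx2
  refine ⟨?_, ⟨?_, ?_⟩, ?_, ?_⟩
  · intro k _ _
    exact part_a K Δ.facets F₁ A k hAF hAnbr Δ₂ hΔ₂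
  · exact isolated_leaf hAΔ₂ hAdisj
  · intro H hH H' hH' hne hne'
    have h := (hmemΔ₂ H hH hne).2.2
    constructor
    · rintro ⟨v, hv⟩
      refine ⟨v, Finset.mem_sdiff.mpr ⟨hv, ?_⟩⟩
      intro hvA
      have hv2 : v ∈ H ∩ F₁ :=
        Finset.mem_inter.mpr ⟨(Finset.mem_inter.mp hv).1, hAF hvA⟩
      rw [h] at hv2
      exact Finset.notMem_empty v hv2
    · rintro ⟨v, hv⟩
      exact ⟨v, (Finset.mem_sdiff.mp hv).1⟩
  · intro T hT hTne
    by_cases hA : A ∈ T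
    · refine ⟨A, isolated_leaf hA ?_⟩
      intro H hH hne
      exact hAdisj H (hT hH) hne
    · exact hLP T (fun H hH => (hmemΔ₂ H (hT hH) (fun he => hA (he ▸ hH))).1) hTne
  · rw [hΔ₂]
    exact graft_main Δ.facets hGr F₁ hleaf A hAF
      (fun G hGS hGne hint => hAnbr G hGS hGne (by rwa [Finset.inter_comm] at hint))
      (fun F hF G hG' h => Δ.antichain F hF G hG' h)

end Statements
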